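/- A MEM cannot start at position i+1 if P[i] = T[MS[i+1].pos − 1]: under this condition, MS[i].len = MS[i+1].len + 1, so MS[i].len > MS[i+1].len, violating the MEM starting condition MS[i].len ≤ MS[i+1].len. -/

import Mathlib

/-- a MEM cannot start at position `i+1` when
`P[i] = T[MS[i+1].pos - 1]`: in that case `MS[i].len = MS[i+1].len + 1`, so the
MEM starting condition `MS[i].len ≤ MS[i+1].len` fails. Here `pos` and `ms` are
the matching statistics of `P` with respect to `T`. -/
theorem no_mem_start {α : Type*} [DecidableEq α] (P T : List α) (ms pos : ℕ → ℕ)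
    (hms_le : ∀ i, ms i ≤ P.length - i)
    (hms_occ : ∀ i, ((P.drop i).take (ms i)) <:+: T)
    (hms_max : ∀ i l, l ≤ P.length - i → ((P.drop i).take l) <:+: T → l ≤ ms i)
    (hpos_len : ∀ i, ms i ≤ T.length - pos i)
    (hpos : ∀ i, (T.drop (pos i)).take (ms i) = (P.drop i).take (ms i))
    (i : ℕ) (hi : i < P.length) (hp : 1 ≤ pos (i + 1))
    (hc : T[pos (i + 1) - 1]? = P[i]?) :
    ms i = ms (i + 1) + 1 ∧ ¬ (ms i ≤ ms (i + 1)) := by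
  have hPi : P[i]? = some P[i] := List.getElem?_eq_getElem hi
  rw [hPi] at hc
  have hlt : pos (i+1) - 1 < T.length := by
    by_contra h
    rw [List.getElem?_eq_none (by omega)] at hc
    exact Option.some_ne_none _ hc.symm
  have heq : T[pos (i+1) - 1] = P[i] := by
    rw [List.getElem?_eq_getElem hlt] at hc
    exact Option.some.inj hc
  -- key: P.drop i take (ms(i+1)+1) = T.drop (pos(i+1)-1) take (ms(i+1)+1)
  have hdropP : P.drop i = P[i] :: P.drop (i+1) := List.drop_eq_getElem_cons hi
  have hdropT : T.drop (pos (i+1) - 1) = T[pos (i+1) - 1] :: T.drop (pos (i+1)) := by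
    have := List.drop_eq_getElem_cons hlt (l := T)
    rwa [Nat.sub_add_cancel hp] at this
  have hkey : (P.drop i).take (ms (i+1) + 1) = (T.drop (pos (i+1) - 1)).take (ms (i+1) + 1) := by
    rw [hdropP, hdropT, List.take_succ_cons, List.take_succ_cons, heq, hpos (i+1)]
  have hinfix : ∀ (k m : ℕ), (T.drop k).take m <:+: T := fun k m =>
    ((List.take_prefix _ _).isInfix).trans ((List.drop_suffix _ _).isInfix)
  have h1 : ms (i+1) + 1 ≤ ms i := by
    apply hms_max i _ (by have := hms_le (i+1); omega)
    rw [hkey]; exact hinfix _ _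
  have h2 : ms i - 1 ≤ ms (i+1) := by
    apply hms_max (i+1) _ (by have := hms_le i; omega)
    have ht : (P.drop (i+1)).take (ms i - 1) = ((P.drop i).take (ms i)).tail := by
      rw [hdropP]
      cases h : ms i with
      | zero => simp
      | succ n => simp only [List.take_succ_cons, List.tail_cons, Nat.add_sub_cancel]
    rw [ht]
    exact ((List.tail_suffix _).isInfix).trans (hms_occ i)
  exact ⟨by omega, by omega⟩
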